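/- For every nonnegative integer n: ∑_{k=0}^n C(n,k)^3 · {1 + 3(n−2k)H_k} = (−1)^n, i.e. T_n^{(3)} = (−1)^n. -/

import Mathlib

noncomputable def H (m : ℕ) : ℚ := ∑ j ∈ Finset.range m, (1 : ℚ) / (j + 1)


def Qp (n k : ℚ) : ℚ :=
  (72)*k^3 + (-102)*k^4 + (72)*k^5 + (-24)*k^6 + (3)*k^7 + (264)*n^1*k^3 + (-297)*n^1*k^4 + (162)*n^1*k^5 + (-39)*n^1*k^6 + (3)*n^1*k^7 + (378)*n^2*k^3 + (-315)*n^2*k^4 + (117)*n^2*k^5 + (-15)*n^2*k^6 + (264)*n^3*k^3 + (-144)*n^3*k^4 + (27)*n^3*k^5 + (90)*n^4*k^3 + (-24)*n^4*k^4 + (12)*n^5*k^3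

def Pp (n k : ℚ) : ℚ :=
  (-72)*k^2 + (-112)*k^3 + (33)*k^4 + (69)*k^5 + (-33)*k^6 + (-15)*k^7 + (12)*k^8 + (-2)*k^9 + (-264)*n^1*k^2 + (-480)*n^1*k^3 + (-3)*n^1*k^4 + (261)*n^1*k^5 + (-41)*n^1*k^6 + (-63)*n^1*k^7 + (24)*n^1*k^8 + (-2)*n^1*k^9 + (-378)*n^2*k^2 + (-792)*n^2*k^3 + (-219)*n^2*k^4 + (327)*n^2*k^5 + (45)*n^2*k^6 + (-75)*n^2*k^7 + (12)*n^2*k^8 + (-264)*n^3*k^2 + (-630)*n^3*k^3 + (-333)*n^3*k^4 + (141)*n^3*k^5 + (81)*n^3*k^6 + (-27)*n^3*k^7 + (-90)*n^4*k^2 + (-242)*n^4*k^3 + (-186)*n^4*k^4 + (-6)*n^4*k^5 + (28)*n^4*k^6 + (-12)*n^5*k^2 + (-36)*n^5*k^3 + (-36)*n^5*k^4 + (-12)*n^5*k^5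

set_option maxHeartbeats 4000000 in
lemma sub1 (N K c d : ℚ) (hN1 : N+1 ≠ 0) (hN2 : N+2 ≠ 0) (hK1 : K+1 ≠ 0)
    (hd : d * (K+1) = c * (N+2-K)) :
    (N+1) * ((c * ((N+1-K)*(N+2-K)) / ((N+1)*(N+2)))^3 * (3*(N-2*K)))
      + (2*N+3) * ((c * (N+2-K) / (N+2))^3 * (3*(N+1-2*K)))
      + (N+2) * (c^3 * (3*(N+2-2*K)))
    = d^3 * (Qp N (K+1) / ((N+1)^3 * (N+2)^3))
      - c^3 * (Qp N K / ((N+1)^3 * (N+2)^3)) := by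
  have hd' : d = c * (N+2-K) / (K+1) := by field_simp; linarith [hd]
  subst hd'
  simp only [Pp, Qp]
  field_simp
  ring

set_option maxHeartbeats 4000000 in
lemma sub2 (N K c d : ℚ) (hN1 : N+1 ≠ 0) (hN2 : N+2 ≠ 0) (hK1 : K+1 ≠ 0)
    (hK2 : K+2 ≠ 0)
    (hd : d * (K+1) = c * (N+2-K)) :
    (N+1) * ((c * ((N+1-K)*(N+2-K)) / ((N+1)*(N+2)))^3)
      + (2*N+3) * ((c * (N+2-K) / (N+2))^3)
      + (N+2) * (c^3)
    = d^3 * (Pp N (K+1) / ((K+2)^3 * (N+1)^3 * (N+2)^3)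
              + Qp N (K+1) * (1/(K+1)) / ((N+1)^3 * (N+2)^3))
      - c^3 * (Pp N K / ((K+1)^3 * (N+1)^3 * (N+2)^3)) := by
  have hd' : d = c * (N+2-K) / (K+1) := by field_simp; linarith [hd]
  subst hd'
  simp only [Pp, Qp]
  field_simp
  ring

lemma key (N K h a b c d : ℚ) (hN1 : N+1 ≠ 0) (hN2 : N+2 ≠ 0) (hK1 : K+1 ≠ 0)
    (hK2 : K+2 ≠ 0)
    (ha : a * ((N+1)*(N+2)) = c * ((N+1-K)*(N+2-K)))
    (hb : b * (N+2) = c * (N+2-K))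
    (hd : d * (K+1) = c * (N+2-K)) :
    (N+1) * (a^3 * (1 + 3*(N-2*K)*h)) + (2*N+3) * (b^3 * (1 + 3*(N+1-2*K)*h))
      + (N+2) * (c^3 * (1 + 3*(N+2-2*K)*h))
    = d^3 * (Pp N (K+1) / ((K+2)^3 * (N+1)^3 * (N+2)^3)
              + Qp N (K+1) * (h + 1/(K+1)) / ((N+1)^3 * (N+2)^3))
      - c^3 * (Pp N K / ((K+1)^3 * (N+1)^3 * (N+2)^3)
              + Qp N K * h / ((N+1)^3 * (N+2)^3)) := by
  have ha' : a = c * ((N+1-K)*(N+2-K)) / ((N+1)*(N+2)) := by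
    field_simp; linarith [ha]
  have hb' : b = c * (N+2-K) / (N+2) := by
    field_simp; linarith [hb]
  subst ha' hb'
  have e1 := sub1 N K c d hN1 hN2 hK1 hd
  have e2 := sub2 N K c d hN1 hN2 hK1 hK2 hd
  linear_combination e2 + h * e1

noncomputable def Fq (n k : ℕ) : ℚ := ((n.choose k : ℚ))^(3:ℕ) * (1 + 3 * ((n:ℚ) - 2*k) * H k)

noncomputable def Gq (n k : ℕ) : ℚ :=
  (((n+2).choose k : ℚ))^3 *
    (Pp n k / (((k:ℚ)+1)^3 * ((n:ℚ)+1)^3 * ((n:ℚ)+2)^3) +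
     Qp n k * H k / (((n:ℚ)+1)^3 * ((n:ℚ)+2)^3))

lemma choose_cast_succ (m k : ℕ) :
    ((m.choose k : ℚ)) * ((m:ℚ)+1) = (((m+1).choose k : ℚ)) * ((m:ℚ)+1-k) := by
  rcases le_or_gt k (m+1) with h | h
  · have := Nat.choose_mul_succ_eq m k
    calc ((m.choose k : ℚ)) * ((m:ℚ)+1) = ((m.choose k * (m+1) : ℕ) : ℚ) := by push_cast; ring
      _ = (((m + 1).choose k * (m + 1 - k) : ℕ) : ℚ) := by rw [this]
      _ = (((m+1).choose k : ℚ)) * ((m:ℚ)+1-k) := by push_cast [Nat.cast_sub h]; ring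
  · rw [Nat.choose_eq_zero_of_lt (by omega), Nat.choose_eq_zero_of_lt h]
    simp

lemma choose_cast_right (m k : ℕ) :
    ((m.choose (k+1) : ℚ)) * ((k:ℚ)+1) = ((m.choose k : ℚ)) * ((m:ℚ)-k) := by
  rcases le_or_gt k m with h | h
  · have := Nat.choose_succ_right_eq m k
    calc ((m.choose (k+1) : ℚ)) * ((k:ℚ)+1) = ((m.choose (k+1) * (k+1) : ℕ) : ℚ) := by push_cast; ring
      _ = ((m.choose k * (m - k) : ℕ) : ℚ) := by rw [this]
      _ = ((m.choose k : ℚ)) * ((m:ℚ)-k) := by push_cast [Nat.cast_sub h]; ring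
  · rw [Nat.choose_eq_zero_of_lt (by omega), Nat.choose_eq_zero_of_lt h]
    simp

lemma H_succ (k : ℕ) : H (k+1) = H k + 1/((k:ℚ)+1) := by
  simp [H, Finset.sum_range_succ]

lemma key_nat (n k : ℕ) :
    ((n:ℚ)+1) * Fq n k + (2*(n:ℚ)+3) * Fq (n+1) k + ((n:ℚ)+2) * Fq (n+2) k
      = Gq n (k+1) - Gq n k := by
  have hN1 : (n:ℚ)+1 ≠ 0 := by positivity
  have hN2 : (n:ℚ)+2 ≠ 0 := by positivity
  have hK1 : (k:ℚ)+1 ≠ 0 := by positivity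
  have hK2 : (k:ℚ)+2 ≠ 0 := by positivity
  have ha : ((n.choose k : ℚ)) * (((n:ℚ)+1)*((n:ℚ)+2))
      = (((n+2).choose k : ℚ)) * (((n:ℚ)+1-k)*((n:ℚ)+2-k)) := by
    have h1 := choose_cast_succ n k
    have h2 := choose_cast_succ (n+1) k
    push_cast at h2 ⊢
    nlinarith [h1, h2]
  have hb : (((n+1).choose k : ℚ)) * ((n:ℚ)+2)
      = (((n+2).choose k : ℚ)) * ((n:ℚ)+2-k) := by
    have h2 := choose_cast_succ (n+1) k
    push_cast at h2 ⊢
    linarith [h2]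
  have hd : (((n+2).choose (k+1) : ℚ)) * ((k:ℚ)+1)
      = (((n+2).choose k : ℚ)) * ((n:ℚ)+2-k) := by
    have h3 := choose_cast_right (n+2) k
    push_cast at h3 ⊢
    linarith [h3]
  have := key (n:ℚ) (k:ℚ) (H k) (n.choose k) ((n+1).choose k) ((n+2).choose k)
      ((n+2).choose (k+1)) hN1 hN2 hK1 hK2 ha hb hd
  simp only [Fq, Gq, H_succ]
  push_cast at this ⊢
  convert this using 2 <;> ring

lemma Fq_zero (n k : ℕ) (h : n < k) : Fq n k = 0 := by
  simp [Fq, Nat.choose_eq_zero_of_lt h]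

noncomputable def S (n : ℕ) : ℚ := ∑ k ∈ Finset.range (n+1), Fq n k

lemma S_ext (n m : ℕ) (h : n + 1 ≤ m) : S n = ∑ k ∈ Finset.range m, Fq n k := by
  unfold S
  exact Finset.sum_subset (Finset.range_subset_range.2 h)
    (fun k _ hk => Fq_zero n k (by simp at hk ⊢; omega))

lemma Gq_zero_left (n : ℕ) : Gq n 0 = 0 := by
  simp [Gq, H, Pp]

lemma Gq_zero_right (n : ℕ) : Gq n (n+3) = 0 := by
  have : (n+2).choose (n+3) = 0 := Nat.choose_eq_zero_of_lt (by omega)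
  simp [Gq, this]

lemma S_rec (n : ℕ) :
    ((n:ℚ)+1) * S n + (2*(n:ℚ)+3) * S (n+1) + ((n:ℚ)+2) * S (n+2) = 0 := by
  rw [S_ext n (n+3) (by omega), S_ext (n+1) (n+3) (by omega), S_ext (n+2) (n+3) (by omega)]
  rw [Finset.mul_sum, Finset.mul_sum, Finset.mul_sum, ← Finset.sum_add_distrib,
    ← Finset.sum_add_distrib]
  have : ∀ k ∈ Finset.range (n+3),
      ((n:ℚ)+1) * Fq n k + (2*(n:ℚ)+3) * Fq (n+1) k + ((n:ℚ)+2) * Fq (n+2) k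
        = Gq n (k+1) - Gq n k := fun k _ => key_nat n k
  rw [Finset.sum_congr rfl this, Finset.sum_range_sub (Gq n), Gq_zero_right, Gq_zero_left]
  ring

lemma S_eq (n : ℕ) : S n = (-1)^n ∧ S (n+1) = (-1)^(n+1) := by
  induction n with
  | zero =>
    constructor
    · simp [S, Fq, H]
    · rw [S]
      rw [Finset.sum_range_succ, Finset.sum_range_succ, Finset.sum_range_zero]
      norm_num [Fq, H]
  | succ m ih =>
    obtain ⟨h1, h2⟩ := ih
    refine ⟨h2, ?_⟩
    have hrec := S_rec m
    have hm2 : ((m:ℚ)+2) ≠ 0 := by positivity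
    have h3 : ((-1:ℚ))^(m+1) = -(-1)^m := by rw [pow_succ]; ring
    have h4 : ((-1:ℚ))^(m+1+1) = (-1)^m := by rw [pow_succ, pow_succ]; ring
    rw [h1, h2, h3] at hrec
    have hgoal : ((m:ℚ)+2) * S (m+1+1) = ((m:ℚ)+2) * ((-1)^(m+1+1)) := by
      rw [h4]
      push_cast at hrec ⊢
      linear_combination hrec
    exact mul_left_cancel₀ hm2 hgoal

theorem paule_schneider_three (n : ℕ) :
    ∑ k ∈ Finset.range (n + 1),
      ((n.choose k : ℚ))^(3 : ℕ) * (1 + (3) * ((n : ℚ) - 2*k) * H k) =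
      (-1)^n := by
  have := (S_eq n).1
  unfold S Fq at this
  convert this using 1
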